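/- arXiv:1908.11009 — 2 statements merged into one kernel-verified Lean document; each statement's English description precedes it below -/
import Mathlib

section
/- For every positive integer n, $\frac{B_n(x+iy)+B_n(x-iy)}{2} = \sum_{m=0}^{\lfloor n/2\rfloor}\binom{n}{2m}B_{n-2m}(x)\,y^{2m}(-1)^m$, where $B_n(z)$ are the type 2 Bernoulli polynomials of a complex variable. -/
open PowerSeries Finset Complex

/-- The degenerate falling factorial `(x)_{n,λ} = x(x-λ)⋯(x-(n-1)λ)`. -/
noncomputable def dff (l x : ℂ) (n : ℕ) : ℂ := ∏ j ∈ Finset.range n, (x - j * l)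

/-- Exponential generating function of a sequence: `Σ f n * t^n / n!`. -/
noncomputable def egf (f : ℕ → ℂ) : PowerSeries ℂ := PowerSeries.mk fun n => f n / n.factorial

/-- The degenerate exponential `e_λ^x(t) = (1+λt)^{x/λ} = Σ (x)_{n,λ} t^n/n!` as a power series. -/
noncomputable def degExp (l x : ℂ) : PowerSeries ℂ := egf (dff l x)

/-- The degenerate cosine `cos_λ^{(y)}(t) = cos((y/λ) log(1+λt)) = (e_λ^{iy}(t)+e_λ^{-iy}(t))/2`. -/
noncomputable def degCos (l y : ℂ) : PowerSeries ℂ :=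
  PowerSeries.C (1/2 : ℂ) * (degExp l (Complex.I * y) + degExp l (-(Complex.I * y)))

/-- The degenerate sine `sin_λ^{(y)}(t) = sin((y/λ) log(1+λt)) = (e_λ^{iy}(t)-e_λ^{-iy}(t))/(2i)`. -/
noncomputable def degSin (l y : ℂ) : PowerSeries ℂ :=
  PowerSeries.C (1/(2*Complex.I) : ℂ) * (degExp l (Complex.I * y) - degExp l (-(Complex.I * y)))

/-- The exponential series `e^{at} = Σ a^n t^n/n!`. -/
noncomputable def expS (a : ℂ) : PowerSeries ℂ := egf (fun n => a ^ n)

/-- The series of `log(1+t)`. -/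
noncomputable def logS : PowerSeries ℂ := PowerSeries.mk fun n => if n = 0 then 0 else (-1)^(n+1) / n

lemma expS_eq (a : ℂ) : expS a = rescale a (PowerSeries.exp ℂ) := by
  ext n
  simp [expS, egf, coeff_rescale, PowerSeries.coeff_exp, div_eq_mul_inv]

lemma expS_mul (a b : ℂ) : expS a * expS b = expS (a+b) := by
  rw [expS_eq, expS_eq, expS_eq, PowerSeries.exp_mul_exp_eq_exp_add]

lemma sum_even_eq (n : ℕ) (f : ℕ → ℂ) (hf : ∀ k, Odd k → f k = 0) :
    ∑ k ∈ Finset.range (n+1), f k = ∑ m ∈ Finset.range (n/2+1), f (2*m) := by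
  rw [← Finset.sum_filter_add_sum_filter_not (Finset.range (n+1)) (fun k => Even k)]
  have h2 : ∑ k ∈ (Finset.range (n+1)).filter (fun k => ¬ Even k), f k = 0 :=
    Finset.sum_eq_zero fun k hk => hf k (Nat.not_even_iff_odd.mp (Finset.mem_filter.mp hk).2)
  rw [h2, add_zero]
  apply Finset.sum_nbij' (i := fun k => k/2) (j := fun m => 2*m)
  · intro k hk; simp only [Finset.mem_filter, Finset.mem_range] at hk ⊢
    obtain ⟨h1, m, hm⟩ := hk
    omega
  · intro m hm; simp only [Finset.mem_range] at hm
    simp only [Finset.mem_filter, Finset.mem_range]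
    exact ⟨by omega, even_two_mul m⟩
  · intro k hk; simp only [Finset.mem_filter, Finset.mem_range] at hk
    obtain ⟨-, m, hm⟩ := hk; omega
  · intro m hm; omega
  · intro k hk; simp only [Finset.mem_filter, Finset.mem_range] at hk
    obtain ⟨-, m, hm⟩ := hk; congr 1; omega


theorem stmt8 (x y : ℝ) (B : ℂ → ℕ → ℂ)
    (hB : ∀ z : ℂ, egf (B z) * (expS (1/2) - expS (-(1/2))) = PowerSeries.X * expS z)
    (n : ℕ) (hn : 0 < n) :
    (B ((x:ℂ) + Complex.I * y) n + B ((x:ℂ) - Complex.I * y) n) / 2 =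
      ∑ m ∈ Finset.range (n/2+1), (n.choose (2*m) : ℂ) * B x (n-2*m) * (y:ℂ)^(2*m) * (-1)^m := by
  set w : ℂ := Complex.I * y with hw
  have hD : expS (1/2 : ℂ) - expS (-(1/2)) ≠ 0 := by
    intro h
    have h1 := congrArg (PowerSeries.coeff 1) h
    simp [expS, egf, PowerSeries.coeff_mk] at h1
  have key : egf (B ((x:ℂ) + w)) + egf (B ((x:ℂ) - w)) =
      (expS w + expS (-w)) * egf (B (x:ℂ)) := by
    apply mul_right_cancel₀ hD
    rw [add_mul, hB, hB, mul_assoc, hB]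
    have e1 : expS ((x:ℂ) + w) = expS w * expS (x:ℂ) := by rw [expS_mul, add_comm]
    have e2 : expS ((x:ℂ) - w) = expS (-w) * expS (x:ℂ) := by
      rw [expS_mul]; ring_nf
    rw [e1, e2]; ring
  have hc := congrArg (PowerSeries.coeff n) key
  rw [map_add, PowerSeries.coeff_mul, Finset.Nat.sum_antidiagonal_eq_sum_range_succ_mk] at hc
  simp only [egf, expS, PowerSeries.coeff_mk, map_add] at hc
  have hn' : (n.factorial : ℂ) ≠ 0 := Nat.cast_ne_zero.mpr n.factorial_ne_zero
  have hmain : B ((x:ℂ) + w) n + B ((x:ℂ) - w) n =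
      ∑ k ∈ Finset.range (n+1), (n.choose k : ℂ) * B x (n-k) * (w^k + (-w)^k) := by
    have hstep : (B ((x:ℂ) + w) n + B ((x:ℂ) - w) n) =
        (n.factorial : ℂ) * (B ((x:ℂ) + w) n / n.factorial + B ((x:ℂ) - w) n / n.factorial) := by
      field_simp
    rw [hstep, hc, Finset.mul_sum]
    apply Finset.sum_congr rfl
    intro k hk
    rw [Finset.mem_range] at hk
    have hkn : k ≤ n := by omega
    have hck : (n.choose k : ℂ) = (n.factorial : ℂ) / (k.factorial * (n-k).factorial) :=
      Nat.cast_choose ℂ hkn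
    have hk' : (k.factorial : ℂ) ≠ 0 := Nat.cast_ne_zero.mpr k.factorial_ne_zero
    have hnk' : ((n-k).factorial : ℂ) ≠ 0 := Nat.cast_ne_zero.mpr (n-k).factorial_ne_zero
    rw [hck]
    field_simp
  rw [hmain]
  rw [Finset.sum_div, sum_even_eq]
  · apply Finset.sum_congr rfl
    intro m hm
    have h1 : w^(2*m) = (-1)^m * (y:ℂ)^(2*m) := by
      rw [hw, mul_pow, pow_mul, pow_mul, Complex.I_sq]
    have h2 : (-w)^(2*m) = w^(2*m) := Even.neg_pow (even_two_mul m) w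
    rw [h2, h1]
    ring
  · intro k hk
    rw [Odd.neg_pow hk]
    ring
end

section
/- For every nonnegative integer n, the type 2 degenerate cosine-Euler polynomials satisfy $E_{n,\lambda}^{(c)}(x,y)=\sum_{k=0}^{n}\sum_{m=0}^{\lfloor k/2\rfloor}\binom{n}{k}E_{n-k,\lambda}(x)(-1)^m\lambda^{k-2m}y^{2m}S_1(k,2m)$. -/
open PowerSeries Finset Complex

lemma coeff_egf (f : ℕ → ℂ) (n : ℕ) : PowerSeries.coeff n (egf f) = f n / n.factorial := by
  simp [egf]

lemma coeff_d_logS (n : ℕ) : PowerSeries.coeff n (d⁄dX ℂ logS) = (-1)^n := by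
  rw [PowerSeries.coeff_derivative]
  have h : ((n:ℂ) + 1) ≠ 0 := Nat.cast_add_one_ne_zero n
  simp only [logS, PowerSeries.coeff_mk, Nat.succ_ne_zero, if_false]
  push_cast
  field_simp
  ring

lemma one_add_X_mul_d_logS : (1 + PowerSeries.X) * d⁄dX ℂ logS = 1 := by
  ext n
  rcases n with _ | m
  · rw [PowerSeries.coeff_zero_eq_constantCoeff]
    simp only [map_mul, map_add, map_one, PowerSeries.constantCoeff_X, add_zero, one_mul,
      ← PowerSeries.coeff_zero_eq_constantCoeff, coeff_d_logS]
    simp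
  · rw [add_mul, one_mul, map_add, PowerSeries.coeff_succ_X_mul, coeff_d_logS, coeff_d_logS]
    simp [pow_succ]

section Rec
variable (S1 : ℕ → ℕ → ℂ)
  (hS1 : ∀ j, logS ^ j = PowerSeries.C (Nat.factorial j : ℂ) * egf (fun k => S1 k j))

include hS1

lemma coeff_logS_pow (k j : ℕ) :
    PowerSeries.coeff k (logS ^ j) = (Nat.factorial j) * S1 k j / k.factorial := by
  rw [hS1 j, PowerSeries.coeff_C_mul, coeff_egf, mul_div_assoc]

lemma S1_rec (n j : ℕ) : S1 (n+1) (j+1) = S1 n j - n * S1 n (j+1) := by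
  have heq : (1 + PowerSeries.X) * d⁄dX ℂ (logS ^ (j+1))
      = PowerSeries.C ((j+1 : ℕ) : ℂ) * logS ^ j := by
    rw [Derivation.leibniz_pow]
    simp only [Nat.add_sub_cancel, smul_eq_mul, nsmul_eq_mul]
    push_cast
    calc (1 + PowerSeries.X) * ((↑j + 1) * (logS ^ j * d⁄dX ℂ logS))
        = (↑j + 1) * (logS ^ j * ((1 + PowerSeries.X) * d⁄dX ℂ logS)) := by ring
      _ = _ := by
          rw [one_add_X_mul_d_logS, mul_one]
          congr 1
          push_cast
          rw [map_add, map_one, map_natCast]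
  have hc := congrArg (PowerSeries.coeff n) heq
  rw [add_mul, one_mul, map_add, PowerSeries.coeff_C_mul] at hc
  have hG : ∀ k, PowerSeries.coeff k (d⁄dX ℂ (logS ^ (j+1)))
      = (Nat.factorial (j+1)) * S1 (k+1) (j+1) / (k+1).factorial * (k+1) := by
    intro k
    rw [PowerSeries.coeff_derivative, coeff_logS_pow S1 hS1]
  have hXG : PowerSeries.coeff n (PowerSeries.X * d⁄dX ℂ (logS ^ (j+1)))
      = (Nat.factorial (j+1)) * S1 n (j+1) / n.factorial * n := by
    rcases n with _ | m
    · simp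
    · rw [PowerSeries.coeff_succ_X_mul, hG]
      have : (m + 1).factorial = (m+1) * m.factorial := Nat.factorial_succ m
      rw [this]
      have hm : ((m:ℂ)+1) ≠ 0 := Nat.cast_add_one_ne_zero m
      have hf : ((m.factorial : ℂ)) ≠ 0 := Nat.cast_ne_zero.mpr (Nat.factorial_ne_zero m)
      push_cast
      field_simp
  rw [hG, hXG, coeff_logS_pow S1 hS1] at hc
  have hn1 : ((n:ℂ)+1) ≠ 0 := Nat.cast_add_one_ne_zero n
  have hf : ((n.factorial : ℂ)) ≠ 0 := Nat.cast_ne_zero.mpr (Nat.factorial_ne_zero n)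
  have hjf : ((j.factorial : ℂ)) ≠ 0 := Nat.cast_ne_zero.mpr (Nat.factorial_ne_zero j)
  have hj1 : ((j:ℂ)+1) ≠ 0 := Nat.cast_add_one_ne_zero j
  rw [Nat.factorial_succ (j), Nat.factorial_succ n] at hc
  push_cast at hc
  field_simp at hc
  have key : (((j:ℂ)+1) * (j.factorial:ℂ) * ((n:ℂ)+1) * (n.factorial:ℂ)^2) *
      (S1 (n+1) (j+1) + n * S1 n (j+1))
      = (((j:ℂ)+1) * (j.factorial:ℂ) * ((n:ℂ)+1) * (n.factorial:ℂ)^2) * S1 n j := by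
    linear_combination (((j:ℂ)+1) * (j.factorial:ℂ) * ((n:ℂ)+1) * (n.factorial:ℂ)^2) * hc
  have key2 := mul_left_cancel₀ (by
    exact mul_ne_zero (mul_ne_zero (mul_ne_zero hj1 hjf) hn1) (pow_ne_zero 2 hf)) key
  linear_combination key2

lemma S1_zero_zero : S1 0 0 = 1 := by
  have := congrArg (PowerSeries.coeff 0) (hS1 0)
  simp [coeff_egf] at this
  simpa using this.symm

lemma S1_succ_zero (n : ℕ) : S1 (n+1) 0 = 0 := by
  have := congrArg (PowerSeries.coeff (n+1)) (hS1 0)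
  rw [pow_zero, PowerSeries.coeff_C_mul, coeff_egf] at this
  have hf : ((n+1).factorial : ℂ) ≠ 0 := Nat.cast_ne_zero.mpr (Nat.factorial_ne_zero _)
  have h1 : PowerSeries.coeff (n+1) (1 : PowerSeries ℂ) = 0 := by
    simp [PowerSeries.coeff_one]
  rw [h1] at this
  field_simp at this
  simpa using this.symm

lemma S1_of_lt : ∀ n j, n < j → S1 n j = 0 := by
  intro n
  induction n with
  | zero =>
    intro j hj
    have := congrArg (PowerSeries.coeff 0) (hS1 j)
    rw [PowerSeries.coeff_C_mul, coeff_egf] at this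
    have h0 : PowerSeries.coeff 0 (logS ^ j) = 0 := by
      rw [PowerSeries.coeff_zero_eq_constantCoeff, map_pow]
      have : PowerSeries.constantCoeff logS = 0 := by simp [logS]
      rw [this, zero_pow (by omega)]
    rw [h0] at this
    field_simp at this
    simp [Nat.factorial_ne_zero] at this
    exact this
  | succ m ih =>
    intro j hj
    obtain ⟨i, rfl⟩ : ∃ i, j = i + 1 := ⟨j - 1, by omega⟩
    rw [S1_rec S1 hS1, ih i (by omega), ih (i+1) (by omega)]
    ring

lemma dff_eq (l xx : ℂ) (n : ℕ) :
    dff l xx n = ∑ j ∈ Finset.range (n+1), S1 n j * l ^ (n - j) * xx ^ j := by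
  induction n with
  | zero => simp [dff, S1_zero_zero S1 hS1]
  | succ m ih =>
    have step : dff l xx (m+1) = dff l xx m * (xx - m * l) := by
      rw [dff, dff, Finset.prod_range_succ]
    have hR : ∑ j ∈ Finset.range (m+2), S1 (m+1) j * l ^ (m + 1 - j) * xx ^ j
        = ∑ j ∈ Finset.range (m+1), (S1 m j - (m:ℂ) * S1 m (j+1)) * l ^ (m - j) * xx ^ (j+1) := by
      rw [Finset.sum_range_succ' (fun j => S1 (m+1) j * l ^ (m + 1 - j) * xx ^ j) (m+1)]
      rw [S1_succ_zero S1 hS1]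
      simp only [zero_mul, mul_zero, add_zero]
      exact Finset.sum_congr rfl fun j hj => by
        rw [S1_rec S1 hS1, Nat.succ_sub_succ]
    have hswap : ∑ j ∈ Finset.range (m+1), S1 m j * l ^ (m - j) * xx ^ j * ((m:ℂ) * l)
        = ∑ j ∈ Finset.range (m+1), (m:ℂ) * S1 m (j+1) * l ^ (m - j) * xx ^ (j+1) := by
      rw [Finset.sum_range_succ' (fun j => S1 m j * l ^ (m - j) * xx ^ j * ((m:ℂ) * l)) m]
      rw [Finset.sum_range_succ (fun j => (m:ℂ) * S1 m (j+1) * l ^ (m - j) * xx ^ (j+1)) m]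
      rw [S1_of_lt S1 hS1 m (m+1) (by omega)]
      have h0 : S1 m 0 * l ^ (m - 0) * xx ^ 0 * ((m:ℂ) * l) = 0 := by
        rcases Nat.eq_zero_or_pos m with h | h
        · subst h; push_cast; ring
        · obtain ⟨i, rfl⟩ : ∃ i, m = i + 1 := ⟨m - 1, by omega⟩
          rw [S1_succ_zero S1 hS1]; ring
      rw [h0, add_zero, mul_zero, zero_mul, zero_mul, add_zero]
      exact Finset.sum_congr rfl fun j hj => by
        simp only [Finset.mem_range] at hj
        have he : m - j = (m - (j+1)) + 1 := by omega
        rw [he, pow_succ]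
        ring
    rw [step, ih, hR]
    calc (∑ j ∈ Finset.range (m+1), S1 m j * l ^ (m - j) * xx ^ j) * (xx - (m:ℂ)*l)
        = (∑ j ∈ Finset.range (m+1), S1 m j * l ^ (m - j) * xx ^ (j+1))
          - ∑ j ∈ Finset.range (m+1), S1 m j * l ^ (m - j) * xx ^ j * ((m:ℂ)*l) := by
          rw [Finset.sum_mul, ← Finset.sum_sub_distrib]
          exact Finset.sum_congr rfl fun j _ => by ring
      _ = (∑ j ∈ Finset.range (m+1), S1 m j * l ^ (m - j) * xx ^ (j+1))
          - ∑ j ∈ Finset.range (m+1), (m:ℂ) * S1 m (j+1) * l ^ (m - j) * xx ^ (j+1) := by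
          rw [hswap]
      _ = ∑ j ∈ Finset.range (m+1), (S1 m j - (m:ℂ) * S1 m (j+1)) * l ^ (m - j) * xx ^ (j+1) := by
          rw [← Finset.sum_sub_distrib]
          exact Finset.sum_congr rfl fun j _ => by ring

lemma coeff_degCos_mul (l yc : ℂ) (k : ℕ) :
    (dff l (Complex.I * yc) k + dff l (-(Complex.I * yc)) k) / 2
      = ∑ m ∈ Finset.range (k/2+1), (-1:ℂ)^m * l^(k-2*m) * yc^(2*m) * S1 k (2*m) := by
  rw [dff_eq S1 hS1, dff_eq S1 hS1, ← Finset.sum_add_distrib]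
  have h1 : ∀ j ∈ Finset.range (k+1),
      (S1 k j * l ^ (k - j) * (Complex.I * yc) ^ j
        + S1 k j * l ^ (k - j) * (-(Complex.I * yc)) ^ j) / 2
      = if Even j then (-1:ℂ)^(j/2) * l^(k-j) * yc^j * S1 k j else 0 := by
    intro j _
    rcases Nat.even_or_odd j with he | ho
    · rw [if_pos he]
      obtain ⟨m, rfl⟩ := he
      have hm : m + m = 2 * m := by ring
      rw [hm]
      have h2 : (2*m)/2 = m := by omega
      rw [h2, Even.neg_pow (by exact ⟨m, by ring⟩), mul_pow, pow_mul, Complex.I_sq]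
      ring
    · rw [if_neg (Nat.not_even_iff_odd.mpr ho), Odd.neg_pow ho]
      ring
  rw [Finset.sum_div, Finset.sum_congr rfl h1]
  rw [Finset.sum_ite, Finset.sum_const_zero, add_zero]
  apply Finset.sum_nbij' (fun j => j / 2) (fun m => 2 * m)
  · intro a ha
    simp only [Finset.mem_filter, Finset.mem_range] at ha ⊢
    omega
  · intro a ha
    simp only [Finset.mem_filter, Finset.mem_range] at ha ⊢
    constructor
    · omega
    · exact ⟨a, by ring⟩
  · intro a ha
    simp only [Finset.mem_filter, Finset.mem_range] at ha
    obtain ⟨-, m, rfl⟩ := ha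
    omega
  · intro a _; omega
  · intro a ha
    simp only [Finset.mem_filter, Finset.mem_range] at ha
    obtain ⟨-, m, rfl⟩ := ha
    have h2 : 2 * ((m+m)/2) = m + m := by omega
    rw [h2]

end Rec

theorem stmt13 (lam x y : ℝ) (E Ec : ℕ → ℂ) (S1 : ℕ → ℕ → ℂ)
    (hE : egf E * (degExp lam (1/2) + degExp lam (-(1/2))) = 2 * degExp lam x)
    (hEc : egf Ec * (degExp lam (1/2) + degExp lam (-(1/2))) =
      2 * degExp lam x * degCos lam y)
    (hS1 : ∀ j, logS ^ j = PowerSeries.C (Nat.factorial j : ℂ) * egf (fun k => S1 k j))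
    (n : ℕ) :
    Ec n = ∑ k ∈ Finset.range (n+1), ∑ m ∈ Finset.range (k/2+1),
      (n.choose k : ℂ) * E (n-k) * (-1)^m * (lam:ℂ)^(k-2*m) * (y:ℂ)^(2*m) * S1 k (2*m) := by
  set D := degExp (lam:ℂ) (1/2) + degExp (lam:ℂ) (-(1/2)) with hDdef
  have hD : D ≠ 0 := by
    intro h
    have hc : PowerSeries.constantCoeff D = 2 := by
      rw [hDdef]
      simp only [degExp, map_add, ← PowerSeries.coeff_zero_eq_constantCoeff]
      rw [coeff_egf, coeff_egf]
      simp [dff]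
      norm_num
    rw [h] at hc
    simp at hc
  have hkey : egf Ec = degCos (lam:ℂ) (y:ℂ) * egf E := by
    apply mul_right_cancel₀ hD
    rw [hEc, ← hE]
    ring
  have hco := congrArg (PowerSeries.coeff n) hkey
  rw [coeff_egf, PowerSeries.coeff_mul, Finset.Nat.sum_antidiagonal_eq_sum_range_succ
    (fun a b => PowerSeries.coeff a (degCos (lam:ℂ) (y:ℂ)) * PowerSeries.coeff b (egf E))] at hco
  have hdc : ∀ k, PowerSeries.coeff k (degCos (lam:ℂ) (y:ℂ))
      = (∑ m ∈ Finset.range (k/2+1),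
          (-1:ℂ)^m * (lam:ℂ)^(k-2*m) * (y:ℂ)^(2*m) * S1 k (2*m)) / k.factorial := by
    intro k
    rw [degCos, PowerSeries.coeff_C_mul, map_add]
    simp only [degExp]
    rw [coeff_egf, coeff_egf, ← coeff_degCos_mul S1 hS1]
    ring
  have hf : ((n.factorial : ℂ)) ≠ 0 := Nat.cast_ne_zero.mpr (Nat.factorial_ne_zero n)
  simp only [coeff_egf, Nat.succ_eq_add_one] at hco
  have h2 : Ec n = n.factorial * ∑ k ∈ Finset.range (n+1),
      PowerSeries.coeff k (degCos (lam:ℂ) (y:ℂ)) * (E (n-k) / (n-k).factorial) := by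
    rw [← hco]
    field_simp
  rw [h2, Finset.mul_sum]
  apply Finset.sum_congr rfl
  intro k hk
  simp only [Finset.mem_range] at hk
  have hkn : k ≤ n := by omega
  rw [hdc k, Nat.cast_choose ℂ hkn]
  have hfk : ((k.factorial : ℂ)) ≠ 0 := Nat.cast_ne_zero.mpr (Nat.factorial_ne_zero k)
  have hfnk : (((n-k).factorial : ℂ)) ≠ 0 := Nat.cast_ne_zero.mpr (Nat.factorial_ne_zero (n-k))
  rw [Finset.sum_div, Finset.sum_mul, Finset.mul_sum]
  apply Finset.sum_congr rfl
  intro m _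
  field_simp
end
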